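/- arXiv:1705.05210 — 3 statements merged into one kernel-verified Lean document; each statement's English description precedes it below -/
import Mathlib

section
/- Let u > 1 and a > 1 be real numbers. Then (1/2)·({u}² − {u}) = (1/(2π))·∫_{−∞}^{∞} ((s+1)/(2s(s−1)) − ζ(s)/s)·u^{s+1}/(s+1) dt, where s = a + it and the integral is over real t. -/
open MeasureTheory Complex Real Set

noncomputable def pf : ℝ → ℂ := Set.indicator (Set.Ioc (0:ℝ) 1) (fun y => 1 - (y:ℂ))

lemma pf_hasMellin {s : ℂ} (hs : 0 < s.re) :
    HasMellin pf s (1/s - 1/(s+1)) := by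
  have h1 := hasMellin_one_Ioc hs
  have h2 := hasMellin_cpow_Ioc 1 (by simpa using hs.trans_le (by linarith [hs] : s.re ≤ s.re + 1))
  have := hasMellin_sub h1.1 h2.1
  rw [h1.2, h2.2] at this
  convert this using 2 with x
  case e'_3 => rfl
  simp [pf, Set.indicator]
  split_ifs <;> simp

lemma pf_continuousAt {x : ℝ} (hx : 0 < x) : ContinuousAt pf x := by
  rcases lt_trichotomy x 1 with h | h | h
  · have : Set.EqOn pf (fun y => 1 - (y:ℂ)) (Set.Ioo 0 1) := by
      intro y hy; simp [pf, Set.indicator, Set.mem_Ioc, hy.1, hy.2.le]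
    exact ContinuousAt.congr (by fun_prop) ((this.eventuallyEq_of_mem
      (isOpen_Ioo.mem_nhds ⟨hx, h⟩)).symm)
  · subst h
    have h0 : pf 1 = 0 := by simp [pf]
    rw [ContinuousAt, h0]
    have hb : ∀ t : ℝ, ‖pf t‖ ≤ ‖1 - (t:ℂ)‖ := by
      intro t
      by_cases ht : t ∈ Set.Ioc (0:ℝ) 1
      · simp [pf, Set.indicator, ht]
      · simp [pf, Set.indicator, ht, norm_nonneg]
    have hg : Filter.Tendsto (fun y : ℝ => ‖1 - (y:ℂ)‖) (nhds 1) (nhds 0) := by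
      have : ContinuousAt (fun y : ℝ => ‖1 - (y:ℂ)‖) 1 := by fun_prop
      rw [ContinuousAt] at this
      simpa using this
    exact squeeze_zero_norm hb hg
  · have : Set.EqOn pf (fun _ => (0:ℂ)) (Set.Ioi 1) := by
      intro y hy; simp [pf, Set.indicator, Set.mem_Ioc, not_le.mpr (Set.mem_Ioi.mp hy)]
    exact ContinuousAt.congr continuousAt_const ((this.eventuallyEq_of_mem
      (isOpen_Ioi.mem_nhds h)).symm)

lemma line_ne_zero {c : ℝ} (hc : 0 < c) (t : ℝ) : ((c:ℂ) + t*I) ≠ 0 := by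
  intro h
  have := congrArg Complex.re h
  simp at this
  linarith

lemma line_continuous (c : ℝ) : Continuous fun t : ℝ => ((c:ℂ) + t*I) := by fun_prop

lemma kernel_integrable {σ τ : ℝ} (hσ : 0 < σ) (hτ : 0 < τ) :
    Integrable fun t : ℝ => (((σ:ℂ)+t*I)*((τ:ℂ)+t*I))⁻¹ := by
  set m1 := min σ 1 with hm1
  set m2 := min τ 1 with hm2
  have hm1p : 0 < m1 := lt_min hσ one_pos
  have hm2p : 0 < m2 := lt_min hτ one_pos
  have habs : ∀ (c : ℝ), 0 < c → ∀ t : ℝ, min c 1 * Real.sqrt (1 + t^2) ≤ ‖(c:ℂ) + t*I‖ := by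
    intro c hc t
    have hmp : (0:ℝ) < min c 1 := lt_min hc one_pos
    have : ‖(c:ℂ) + t*I‖ = Real.sqrt (c^2 + t^2) := by
      rw [Complex.norm_add_mul_I]
    rw [this, ← Real.sqrt_sq hmp.le, ← Real.sqrt_mul (sq_nonneg _)]
    apply Real.sqrt_le_sqrt
    have h1 : min c 1 ≤ c := min_le_left _ _
    have h2 : min c 1 ≤ 1 := min_le_right _ _
    have h3 : (min c 1)^2 ≤ c^2 := by nlinarith
    have h4 : (min c 1)^2 ≤ 1 := by nlinarith
    nlinarith [sq_nonneg t]
  apply Integrable.mono' ((integrable_inv_one_add_sq).const_mul ((m1*m2)⁻¹))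
  · apply Continuous.aestronglyMeasurable
    apply Continuous.inv₀
    · exact ((line_continuous σ).mul (line_continuous τ))
    · intro t
      exact mul_ne_zero (line_ne_zero hσ t) (line_ne_zero hτ t)
  · refine Filter.Eventually.of_forall fun t => ?_
    rw [norm_inv, norm_mul]
    have hb : m1*m2*(1+t^2) ≤ ‖(σ:ℂ)+t*I‖ * ‖(τ:ℂ)+t*I‖ := by
      have h1 := habs σ hσ t
      have h2 := habs τ hτ t
      have hs : Real.sqrt (1+t^2) * Real.sqrt (1+t^2) = 1+t^2 :=
        Real.mul_self_sqrt (by positivity)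
      calc m1*m2*(1+t^2) = (m1 * Real.sqrt (1+t^2)) * (m2 * Real.sqrt (1+t^2)) := by
              rw [mul_mul_mul_comm, hs]
        _ ≤ ‖(σ:ℂ)+t*I‖ * ‖(τ:ℂ)+t*I‖ := by
              apply mul_le_mul h1 h2 (by positivity) (norm_nonneg _)
    have h1t : (0:ℝ) < 1 + t^2 := by positivity
    have hp : (0:ℝ) < m1*m2*(1+t^2) := by positivity
    calc (‖(σ:ℂ)+t*I‖ * ‖(τ:ℂ)+t*I‖)⁻¹ ≤ (m1*m2*(1+t^2))⁻¹ :=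
          inv_anti₀ hp hb
      _ = (m1*m2)⁻¹ * (1+t^2)⁻¹ := by rw [mul_inv]

lemma kernel_eq {s : ℂ} (h0 : s ≠ 0) (h1 : s+1 ≠ 0) : 1/s - 1/(s+1) = (s*(s+1))⁻¹ := by
  field_simp
  ring

lemma line_add_one_ne_zero {c : ℝ} (hc : 0 < c) (t : ℝ) : ((c:ℂ) + t*I) + 1 ≠ 0 := by
  have : ((c:ℂ) + t*I) + 1 = (((c+1 : ℝ)):ℂ) + t*I := by push_cast; ring
  rw [this]
  exact line_ne_zero (by linarith) t

lemma perron {σ x : ℝ} (hσ : 0 < σ) (hx : 0 < x) :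
    ((1/(2*π) : ℝ) : ℂ) *
      (∫ t : ℝ, (x:ℂ)^(-((σ:ℂ)+t*I)) * (((σ:ℂ)+t*I)*(((σ:ℂ)+t*I)+1))⁻¹) = pf x := by
  have hre : ((σ:ℂ)).re = σ := by simp
  have hconv : MellinConvergent pf σ := (pf_hasMellin (by simp [hσ])).1
  have hmel : ∀ t : ℝ, mellin pf ((σ:ℂ)+t*I) = (((σ:ℂ)+t*I)*(((σ:ℂ)+t*I)+1))⁻¹ := by
    intro t
    have hre' : ((σ:ℂ)+t*I).re = σ := by simp
    have := (pf_hasMellin (s := (σ:ℂ)+t*I) (by rw [hre']; exact hσ)).2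
    rw [this, kernel_eq (line_ne_zero hσ t) (line_add_one_ne_zero hσ t)]
  have hvert : VerticalIntegrable (mellin pf) σ := by
    apply (Integrable.congr _ (Filter.Eventually.of_forall fun t => (hmel t).symm))
    have := kernel_integrable hσ (by linarith : (0:ℝ) < σ + 1)
    apply this.congr (Filter.Eventually.of_forall fun t => ?_)
    congr 2
    push_cast; ring
  have hinv := mellinInv_mellin_eq σ pf hx hconv hvert (pf_continuousAt hx)
  rw [mellinInv] at hinv
  rw [← hinv, Complex.real_smul]
  congr 1
  apply integral_congr_ae (Filter.Eventually.of_forall fun t => ?_)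
  rw [hmel t, smul_eq_mul]

lemma cpow_cont {x : ℝ} (hx : 0 < x) {g : ℝ → ℂ} (hg : Continuous g) :
    Continuous fun t : ℝ => (x:ℂ) ^ (g t) := by
  have hx0 : (x:ℂ) ≠ 0 := by exact_mod_cast hx.ne'
  simp_rw [Complex.cpow_def_of_ne_zero hx0]
  fun_prop

lemma norm_cpow_real {x : ℝ} (hx : 0 < x) (w : ℂ) : ‖(x:ℂ) ^ w‖ = x ^ w.re := by
  rw [Complex.norm_cpow_eq_rpow_re_of_pos hx]

lemma norm_nat_cpow {a : ℝ} (ha : 0 < a) {s : ℂ} (hs : s.re = a) (n : ℕ) :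
    ‖1/(n:ℂ)^s‖ = ((n:ℝ)^a)⁻¹ := by
  rcases Nat.eq_zero_or_pos n with rfl | hn
  · have hs0 : s ≠ 0 := fun h => by rw [h] at hs; simp at hs; linarith
    simp [Complex.zero_cpow hs0, Real.zero_rpow ha.ne']
  · have hn' : (0:ℝ) < (n:ℝ) := by exact_mod_cast hn
    rw [norm_div, norm_one]
    have : ((n:ℕ):ℂ) = (((n:ℝ)):ℂ) := by push_cast; ring
    rw [this, norm_cpow_real hn', hs, one_div]

lemma summable_rpow_inv {a : ℝ} (ha : 1 < a) : Summable fun n : ℕ => ((n:ℝ)^a)⁻¹ :=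
  (Real.summable_nat_rpow_inv).mpr ha

lemma zeta_norm_le {a : ℝ} (ha : 1 < a) {s : ℂ} (hs : s.re = a) :
    ‖riemannZeta s‖ ≤ ∑' n : ℕ, ((n:ℝ)^a)⁻¹ := by
  rw [zeta_eq_tsum_one_div_nat_cpow (by rw [hs]; exact ha)]
  calc ‖∑' n : ℕ, 1/(n:ℂ)^s‖ ≤ ∑' n : ℕ, ‖1/(n:ℂ)^s‖ := by
        apply norm_tsum_le_tsum_norm
        simpa only [fun n => norm_nat_cpow (by linarith : (0:ℝ) < a) hs n]
          using summable_rpow_inv ha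
    _ = ∑' n : ℕ, ((n:ℝ)^a)⁻¹ := by
        exact tsum_congr fun n => norm_nat_cpow (by linarith) hs n

lemma split_eq (s Z U : ℂ) (h2 : s + 1 ≠ 0) :
    ((s+1)/(2*s*(s-1)) - Z/s) * U / (s+1) = U * (2*s*(s-1))⁻¹ - Z * (U * (s*(s+1))⁻¹) := by
  rw [sub_mul, sub_div]
  congr 1
  · rw [div_mul_eq_mul_div, div_div, mul_comm (2*s*(s-1)) (s+1),
      mul_div_mul_left _ _ h2, div_eq_mul_inv]
  · rw [div_mul_eq_mul_div, div_div, mul_inv, div_eq_mul_inv, ← mul_inv]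
    ring

lemma gauss_sum_Icc (N : ℕ) : (∑ n ∈ Finset.Icc 1 N, (n:ℂ)) * 2 = (N:ℂ) * ((N:ℂ)+1) := by
  induction N with
  | zero => simp
  | succ N ih =>
      rw [Finset.sum_Icc_succ_top (by omega : 1 ≤ N+1), add_mul, ih]
      push_cast; ring

/-- For real `u > 1` and `a > 1`,
`(1/2)({u}² - {u}) = (1/(2π)) ∫_{-∞}^{∞} ((s+1)/(2s(s-1)) - ζ(s)/s) u^{s+1}/(s+1) dt`
with `s = a + it`. -/
theorem popov_mellin_inversion_right (u a : ℝ) (hu : 1 < u) (ha : 1 < a) :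
    ((1 / 2 * (Int.fract u ^ 2 - Int.fract u) : ℝ) : ℂ) =
      (1 / (2 * π) : ℝ) *
        ∫ t : ℝ, (((a : ℂ) + t * I + 1) / (2 * ((a : ℂ) + t * I) * ((a : ℂ) + t * I - 1)) -
            riemannZeta ((a : ℂ) + t * I) / ((a : ℂ) + t * I)) *
          (u : ℂ) ^ ((a : ℂ) + t * I + 1) / ((a : ℂ) + t * I + 1) := by
  have hu0 : (0:ℝ) < u := by linarith
  have huC : (u:ℂ) ≠ 0 := by exact_mod_cast hu0.ne'
  have ha0 : (0:ℝ) < a := by linarith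
  have ha1 : (0:ℝ) < a - 1 := by linarith
  have hs_ne : ∀ t:ℝ, (a:ℂ)+t*I ≠ 0 := fun t => line_ne_zero ha0 t
  have hs1_eq : ∀ t:ℝ, (a:ℂ)+t*I - 1 = ((a-1:ℝ):ℂ)+t*I := fun t => by push_cast; ring
  have hs1_ne : ∀ t:ℝ, (a:ℂ)+t*I - 1 ≠ 0 := fun t => by
    rw [hs1_eq]; exact line_ne_zero ha1 t
  have hsp1_ne : ∀ t:ℝ, (a:ℂ)+t*I + 1 ≠ 0 := fun t => line_add_one_ne_zero ha0 t
  have hre : ∀ t:ℝ, ((a:ℂ)+t*I).re = a := fun t => by simp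
  set A : ℝ → ℂ := fun t =>
    (u:ℂ)^((a:ℂ)+t*I+1) * (2 * ((a:ℂ)+t*I) * ((a:ℂ)+t*I-1))⁻¹ with hA_def
  set C : ℝ → ℂ := fun t =>
    riemannZeta ((a:ℂ)+t*I) * ((u:ℂ)^((a:ℂ)+t*I+1) * (((a:ℂ)+t*I)*((a:ℂ)+t*I+1))⁻¹) with hC_def
  -- pointwise split of the integrand
  have hsplit : ∀ t:ℝ,
      (((a : ℂ) + t * I + 1) / (2 * ((a : ℂ) + t * I) * ((a : ℂ) + t * I - 1)) -
            riemannZeta ((a : ℂ) + t * I) / ((a : ℂ) + t * I)) *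
          (u : ℂ) ^ ((a : ℂ) + t * I + 1) / ((a : ℂ) + t * I + 1) = A t - C t := by
    intro t
    rw [hA_def, hC_def]
    exact split_eq _ _ _ (hsp1_ne t)
  -- kernel integrability on the line
  have hkerA : Integrable fun t : ℝ => (((a:ℂ)+t*I)*((a:ℂ)+t*I-1))⁻¹ := by
    have := kernel_integrable ha0 ha1
    apply this.congr (Filter.Eventually.of_forall fun t => ?_)
    rw [hs1_eq t]
  have hkerC : Integrable fun t : ℝ => (((a:ℂ)+t*I)*((a:ℂ)+t*I+1))⁻¹ := by
    have := kernel_integrable ha0 (by linarith : (0:ℝ) < a + 1)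
    apply this.congr (Filter.Eventually.of_forall fun t => ?_)
    congr 1
    push_cast; ring
  have hucont : Continuous fun t : ℝ => (u:ℂ)^((a:ℂ)+t*I+1) :=
    cpow_cont hu0 (by fun_prop)
  have hunorm : ∀ t : ℝ, ‖(u:ℂ)^((a:ℂ)+t*I+1)‖ = u^(a+1) := by
    intro t
    rw [norm_cpow_real hu0]
    congr 1
    simp
  have hA : Integrable A := by
    have : A = fun t : ℝ => (2⁻¹ * (u:ℂ)^((a:ℂ)+t*I+1)) *
        ((((a:ℂ)+t*I)*((a:ℂ)+t*I-1))⁻¹) := by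
      funext t
      rw [hA_def]
      show (u:ℂ)^((a:ℂ)+t*I+1) * (2 * ((a:ℂ)+t*I) * ((a:ℂ)+t*I-1))⁻¹ = _
      rw [show (2 * ((a:ℂ)+t*I) * ((a:ℂ)+t*I-1)) = 2 * (((a:ℂ)+t*I) * ((a:ℂ)+t*I-1)) by ring,
        mul_inv]
      ring
    rw [this]
    apply hkerA.bdd_mul (c := 2⁻¹ * u^(a+1)) ((continuous_const.mul hucont).aestronglyMeasurable)
    exact Filter.Eventually.of_forall fun t => by rw [Pi.mul_apply, norm_mul, hunorm t]; simp
  have hzcont : Continuous fun t : ℝ => riemannZeta ((a:ℂ)+t*I) := by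
    rw [continuous_iff_continuousAt]
    intro t
    have hne1 : (a:ℂ)+t*I ≠ 1 := by
      intro h
      have := congrArg Complex.re h
      simp at this
      linarith
    exact ContinuousAt.comp (x := t) (differentiableAt_riemannZeta hne1).continuousAt
      (line_continuous a).continuousAt
  set Z : ℝ := ∑' n : ℕ, ((n:ℝ)^a)⁻¹ with hZ
  have hznorm : ∀ t : ℝ, ‖riemannZeta ((a:ℂ)+t*I)‖ ≤ Z := fun t =>
    zeta_norm_le ha (hre t)
  have hC : Integrable C := by
    have : C = fun t : ℝ => (riemannZeta ((a:ℂ)+t*I) * (u:ℂ)^((a:ℂ)+t*I+1)) *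
        ((((a:ℂ)+t*I)*((a:ℂ)+t*I+1))⁻¹) := by
      funext t
      rw [hC_def]
      show riemannZeta ((a:ℂ)+t*I) * ((u:ℂ)^((a:ℂ)+t*I+1) * (((a:ℂ)+t*I)*((a:ℂ)+t*I+1))⁻¹) = _
      ring
    rw [this]
    apply hkerC.bdd_mul (c := Z * u^(a+1)) ((hzcont.mul hucont).aestronglyMeasurable)
    refine Filter.Eventually.of_forall fun t => ?_
    rw [Pi.mul_apply, norm_mul, hunorm t]
    exact mul_le_mul_of_nonneg_right (hznorm t) (Real.rpow_nonneg hu0.le _)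
  -- evaluation of the first integral
  have hinvu : ∀ w : ℂ, ((u⁻¹:ℝ):ℂ)^(-w) = (u:ℂ)^w := by
    intro w
    rw [Complex.ofReal_inv, Complex.inv_cpow _ _
      (by rw [Complex.arg_ofReal_of_nonneg hu0.le]; exact Ne.symm Real.pi_ne_zero),
      ← Complex.cpow_neg, neg_neg]
  have hApt : ∀ t:ℝ, A t = ((u:ℂ)^2/2) *
      (((u⁻¹:ℝ):ℂ)^(-(((a-1:ℝ):ℂ)+t*I)) *
        ((((a-1:ℝ):ℂ)+t*I)*((((a-1:ℝ):ℂ)+t*I)+1))⁻¹) := by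
    intro t
    rw [hA_def]
    show (u:ℂ)^((a:ℂ)+t*I+1) * (2 * ((a:ℂ)+t*I) * ((a:ℂ)+t*I-1))⁻¹ = _
    have e1 : ((a-1:ℝ):ℂ)+t*I = ((a:ℂ)+t*I) - 1 := (hs1_eq t).symm
    rw [e1, hinvu]
    rw [show ((a:ℂ)+t*I) - 1 + 1 = (a:ℂ)+t*I by ring]
    rw [show (a:ℂ)+t*I+1 = (((a:ℂ)+t*I-1)+2) by ring, Complex.cpow_add _ _ huC]
    rw [show ((2:ℂ)) = ((2:ℕ):ℂ) by norm_num, Complex.cpow_natCast]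
    push_cast
    rw [show 2*((a:ℂ)+t*I)*((a:ℂ)+t*I-1) = 2*((((a:ℂ)+t*I)-1)*((a:ℂ)+t*I)) by ring,
      mul_inv]
    ring
  have hE1 : ((1/(2*π):ℝ):ℂ) * ∫ t, A t = ((u:ℂ)^2 - u)/2 := by
    rw [integral_congr_ae (Filter.Eventually.of_forall hApt), integral_const_mul]
    rw [show ((1/(2*π):ℝ):ℂ) * (((u:ℂ)^2/2) * ∫ t : ℝ,
        ((u⁻¹:ℝ):ℂ)^(-(((a-1:ℝ):ℂ)+t*I)) *
          ((((a-1:ℝ):ℂ)+t*I)*((((a-1:ℝ):ℂ)+t*I)+1))⁻¹)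
      = ((u:ℂ)^2/2) * (((1/(2*π):ℝ):ℂ) * ∫ t : ℝ,
        ((u⁻¹:ℝ):ℂ)^(-(((a-1:ℝ):ℂ)+t*I)) *
          ((((a-1:ℝ):ℂ)+t*I)*((((a-1:ℝ):ℂ)+t*I)+1))⁻¹) by ring]
    rw [perron ha1 (inv_pos.mpr hu0)]
    have h1 : u⁻¹ ≤ 1 := by
      rw [← one_div]
      rw [div_le_one hu0]
      linarith
    have hmem : u⁻¹ ∈ Set.Ioc (0:ℝ) 1 := ⟨inv_pos.mpr hu0, h1⟩
    rw [pf, Set.indicator_of_mem hmem]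
    push_cast
    field_simp
  -- the series for the zeta integral
  set T : ℕ → ℝ → ℂ := fun n t =>
    (1/(n:ℂ)^((a:ℂ)+t*I)) * ((u:ℂ)^((a:ℂ)+t*I+1) * (((a:ℂ)+t*I)*((a:ℂ)+t*I+1))⁻¹) with hT_def
  have hCt : ∀ t:ℝ, C t = ∑' n : ℕ, T n t := by
    intro t
    rw [hC_def]
    show riemannZeta ((a:ℂ)+t*I) * _ = _
    rw [zeta_eq_tsum_one_div_nat_cpow (by rw [hre t]; exact ha)]
    exact (tsum_mul_right).symm
  have hTnorm : ∀ (n : ℕ) (t : ℝ), ‖T n t‖ =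
      ((n:ℝ)^a)⁻¹ * (u^(a+1) * ‖(((a:ℂ)+t*I)*((a:ℂ)+t*I+1))⁻¹‖) := by
    intro n t
    rw [hT_def]
    show ‖(1/(n:ℂ)^((a:ℂ)+t*I)) * ((u:ℂ)^((a:ℂ)+t*I+1) * (((a:ℂ)+t*I)*((a:ℂ)+t*I+1))⁻¹)‖ = _
    rw [norm_mul, norm_mul, norm_nat_cpow ha0 (hre t), hunorm t]
  have hTint : ∀ n : ℕ, Integrable (T n) := by
    intro n
    have hrw : T n = fun t : ℝ => ((1/(n:ℂ)^((a:ℂ)+t*I)) * (u:ℂ)^((a:ℂ)+t*I+1)) *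
        ((((a:ℂ)+t*I)*((a:ℂ)+t*I+1))⁻¹) := by
      funext t
      rw [hT_def]
      show (1/(n:ℂ)^((a:ℂ)+t*I)) * ((u:ℂ)^((a:ℂ)+t*I+1) * (((a:ℂ)+t*I)*((a:ℂ)+t*I+1))⁻¹) = _
      ring
    rw [hrw]
    apply hkerC.bdd_mul (c := ((n:ℝ)^a)⁻¹ * u^(a+1))
    · rcases Nat.eq_zero_or_pos n with rfl | hn
      · have : (fun t:ℝ => (1/((0:ℕ):ℂ)^((a:ℂ)+t*I)) * (u:ℂ)^((a:ℂ)+t*I+1))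
            = fun _ => (0:ℂ) := by
          funext t
          simp [Complex.zero_cpow (hs_ne t)]
        rw [this]
        exact aestronglyMeasurable_const
      · have hnR : (0:ℝ) < (n:ℝ) := by exact_mod_cast hn
        have hcont : Continuous fun t : ℝ => (n:ℂ)^((a:ℂ)+t*I) := by
          have := cpow_cont (x := (n:ℝ)) hnR (g := fun t : ℝ => (a:ℂ)+t*I) (by fun_prop)
          simpa using this
        have hne : ∀ t : ℝ, (n:ℂ)^((a:ℂ)+t*I) ≠ 0 := by
          intro t
          rw [Ne, Complex.cpow_eq_zero_iff]
          push_neg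
          intro h
          exact absurd h (by exact_mod_cast hn.ne')
        exact ((continuous_const.div hcont hne).mul hucont).aestronglyMeasurable
    · refine Filter.Eventually.of_forall fun t => ?_
      rw [norm_mul, hunorm t, norm_nat_cpow ha0 (hre t)]
  have hTsum : Summable fun n : ℕ => ∫ t, ‖T n t‖ := by
    have hrw : (fun n : ℕ => ∫ t, ‖T n t‖) = fun n : ℕ => ((n:ℝ)^a)⁻¹ *
        ∫ t : ℝ, (u^(a+1) * ‖(((a:ℂ)+t*I)*((a:ℂ)+t*I+1))⁻¹‖) := by
      funext n
      rw [← integral_const_mul]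
      exact integral_congr_ae (Filter.Eventually.of_forall fun t => hTnorm n t)
    rw [hrw]
    exact (summable_rpow_inv ha).mul_right _
  have hswap : ∫ t, C t = ∑' n : ℕ, ∫ t, T n t := by
    rw [integral_tsum_of_summable_integral_norm hTint hTsum]
    exact integral_congr_ae (Filter.Eventually.of_forall fun t => hCt t)
  set N : ℕ := ⌊u⌋₊ with hN
  have hTval : ∀ n : ℕ, ((1/(2*π):ℝ):ℂ) * ∫ t, T n t =
      (if n ∈ Finset.Icc 1 N then (u:ℂ) - n else 0) := by
    intro n
    rcases Nat.eq_zero_or_pos n with rfl | hn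
    · have hT0 : T 0 = fun _ : ℝ => (0:ℂ) := by
        funext t
        rw [hT_def]
        show (1/((0:ℕ):ℂ)^((a:ℂ)+t*I)) * _ = _
        simp [Complex.zero_cpow (hs_ne t)]
      rw [hT0]
      simp
    · have hnR : (0:ℝ) < (n:ℝ) := by exact_mod_cast hn
      have hxpos : (0:ℝ) < (n:ℝ) * u⁻¹ := by positivity
      have hpt : ∀ t:ℝ, T n t = (u:ℂ) *
          (((((n:ℝ) * u⁻¹ : ℝ)):ℂ)^(-((a:ℂ)+t*I)) * (((a:ℂ)+t*I)*(((a:ℂ)+t*I)+1))⁻¹) := by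
        intro t
        rw [hT_def]
        show (1/(n:ℂ)^((a:ℂ)+t*I)) * ((u:ℂ)^((a:ℂ)+t*I+1) * (((a:ℂ)+t*I)*((a:ℂ)+t*I+1))⁻¹) = _
        rw [show ((((n:ℝ) * u⁻¹ : ℝ)):ℂ) = (((n:ℝ):ℂ)) * (((u⁻¹:ℝ)):ℂ) by push_cast; ring,
          Complex.mul_cpow_ofReal_nonneg hnR.le (inv_nonneg.mpr hu0.le), hinvu]
        rw [Complex.cpow_add _ _ huC, Complex.cpow_one]
        rw [Complex.cpow_neg]
        rw [show (((n:ℝ)):ℂ) = (n:ℂ) by push_cast; ring]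
        rw [one_div]
        ring
      rw [integral_congr_ae (Filter.Eventually.of_forall hpt), integral_const_mul]
      rw [show ((1/(2*π):ℝ):ℂ) * ((u:ℂ) * ∫ t:ℝ,
            ((((n:ℝ) * u⁻¹ : ℝ)):ℂ)^(-((a:ℂ)+t*I)) * (((a:ℂ)+t*I)*(((a:ℂ)+t*I)+1))⁻¹)
        = (u:ℂ) * (((1/(2*π):ℝ):ℂ) * ∫ t:ℝ,
            ((((n:ℝ) * u⁻¹ : ℝ)):ℂ)^(-((a:ℂ)+t*I)) * (((a:ℂ)+t*I)*(((a:ℂ)+t*I)+1))⁻¹) by ring]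
      rw [perron ha0 hxpos]
      by_cases hmem : n ∈ Finset.Icc 1 N
      · have h2 : (n:ℝ) ≤ u := by
          have := (Finset.mem_Icc.mp hmem).2
          exact (Nat.le_floor_iff hu0.le).mp this
        have hm : (n:ℝ) * u⁻¹ ∈ Set.Ioc (0:ℝ) 1 :=
          ⟨hxpos, by rw [← div_eq_mul_inv, div_le_one hu0]; exact h2⟩
        rw [if_pos hmem, pf, Set.indicator_of_mem hm]
        push_cast
        field_simp
      · have h2 : ¬ ((n:ℝ) ≤ u) := fun hc =>
          hmem (Finset.mem_Icc.mpr ⟨hn, Nat.le_floor hc⟩)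
        have hm : (n:ℝ) * u⁻¹ ∉ Set.Ioc (0:ℝ) 1 := by
          intro hc
          apply h2
          have := hc.2
          rwa [← div_eq_mul_inv, div_le_one hu0] at this
        rw [if_neg hmem, pf, Set.indicator_of_notMem hm, mul_zero]
  have hfract : Int.fract u = u - (N:ℝ) := by
    rw [Int.fract]
    congr 1
    exact (natCast_floor_eq_intCast_floor hu0.le).symm
  have hsum_eval : (∑' n : ℕ, ((1/(2*π):ℝ):ℂ) * ∫ t, T n t)
      = (N:ℂ) * u - (N:ℂ)*((N:ℂ)+1)/2 := by
    have hgauss : (∑ n ∈ Finset.Icc 1 N, (n:ℂ)) = (N:ℂ)*((N:ℂ)+1)/2 := by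
      have := gauss_sum_Icc N
      field_simp
      linear_combination this
    calc (∑' n : ℕ, ((1/(2*π):ℝ):ℂ) * ∫ t, T n t)
        = ∑' n : ℕ, (if n ∈ Finset.Icc 1 N then (u:ℂ) - n else 0) := tsum_congr hTval
      _ = ∑ n ∈ Finset.Icc 1 N, (if n ∈ Finset.Icc 1 N then (u:ℂ) - n else 0) :=
          tsum_eq_sum (fun n hn => if_neg hn)
      _ = ∑ n ∈ Finset.Icc 1 N, ((u:ℂ) - n) := Finset.sum_congr rfl (fun n hn => if_pos hn)
      _ = (N:ℂ) * u - (N:ℂ)*((N:ℂ)+1)/2 := by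
          rw [Finset.sum_sub_distrib, Finset.sum_const, Nat.card_Icc, hgauss]
          simp [nsmul_eq_mul]
  rw [integral_congr_ae (Filter.Eventually.of_forall hsplit), integral_sub hA hC,
    mul_sub (((1 / (2 * π) : ℝ)):ℂ), hE1, hswap, ← tsum_mul_left, hsum_eval, hfract]
  push_cast
  ring
end

section
/- Let x > 1 be a real number and define F(s) = ((2−s)/(2s(s−1)) − ζ(1−s)/(1−s)) · x^{s−2} · ζ'(s)/(ζ(s)·(2−s)) for complex s. Then F has a pole of order at most 2 at s = 1, and its residue there equals (2 − log(2π))/(2x); equivalently, the derivative of s ↦ (s−1)²·F(s) tends to (2 − log(2π))/(2x) as s → 1 through values s ≠ 1. -/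
open Complex Real Filter
open scoped Topology

noncomputable def popovR : ℂ → ℂ := fun s => (Gammaℝ s)⁻¹
noncomputable def popovQ : ℂ → ℂ := fun s => (completedRiemannZeta₀ s - 1 / s) * popovR s
noncomputable def popovZ : ℂ → ℂ := fun s => (s - 1) * popovQ s + popovR s

lemma popovR_diff : Differentiable ℂ popovR := differentiable_Gammaℝ_inv

lemma popovQ_diffOn : DifferentiableOn ℂ popovQ {s : ℂ | s ≠ 0} :=
  ((differentiable_completedZeta₀.differentiableOn).sub
    ((differentiableOn_const _).div differentiableOn_id fun s hs => hs)).mul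
    popovR_diff.differentiableOn

lemma isOpen_ne_zero : IsOpen {s : ℂ | s ≠ 0} := isOpen_ne

lemma popovQ_an : AnalyticOnNhd ℂ popovQ {s : ℂ | s ≠ 0} :=
  popovQ_diffOn.analyticOnNhd isOpen_ne_zero

lemma popovR_an : AnalyticOnNhd ℂ popovR Set.univ :=
  popovR_diff.differentiableOn.analyticOnNhd isOpen_univ

lemma popovR_one : popovR 1 = 1 := by simp [popovR, Gammaℝ_one]

lemma popovZ_one : popovZ 1 = 1 := by simp [popovZ, popovR_one]

lemma popov_zeta_eq {s : ℂ} (hs0 : s ≠ 0) (hs1 : s ≠ 1) :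
    riemannZeta s = popovQ s + popovR s / (s - 1) := by
  have h1 : (1 : ℂ) - s ≠ 0 := sub_ne_zero.2 fun h => hs1 h.symm
  have h2 : s - 1 ≠ 0 := sub_ne_zero.2 hs1
  have key : (1 : ℂ) / (1 - s) = -(1 / (s - 1)) := by
    rw [eq_neg_iff_add_eq_zero, div_add_div _ _ h1 h2]; simp [sub_add_sub_cancel]
  rw [riemannZeta_def_of_ne_zero hs0, completedRiemannZeta_eq, div_eq_mul_inv, key]
  show _ = _ * (Gammaℝ s)⁻¹ + (Gammaℝ s)⁻¹ / (s - 1)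
  ring

lemma popov_zeta_hasDeriv {s : ℂ} (hs0 : s ≠ 0) (hs1 : s ≠ 1) :
    HasDerivAt riemannZeta
      ((deriv popovQ s * (s - 1) ^ 2 + deriv popovR s * (s - 1) - popovR s) / (s - 1) ^ 2) s := by
  have h2 : s - 1 ≠ 0 := sub_ne_zero.2 hs1
  have hQd : HasDerivAt popovQ (deriv popovQ s) s :=
    ((popovQ_diffOn.differentiableAt (isOpen_ne_zero.mem_nhds hs0)).hasDerivAt)
  have hRd : HasDerivAt popovR (deriv popovR s) s := (popovR_diff s).hasDerivAt
  have hsub : HasDerivAt (fun t : ℂ => t - 1) 1 s := (hasDerivAt_id s).sub_const 1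
  have hdiv : HasDerivAt (fun t => popovR t / (t - 1))
      ((deriv popovR s * (s - 1) - popovR s * 1) / (s - 1) ^ 2) s := hRd.div hsub h2
  have htot := hQd.add hdiv
  have heq : riemannZeta =ᶠ[𝓝 s] fun t => popovQ t + popovR t / (t - 1) := by
    have hmem : {t : ℂ | t ≠ 0 ∧ t ≠ 1} ∈ 𝓝 s := by
      refine IsOpen.mem_nhds ?_ ⟨hs0, hs1⟩
      exact (isOpen_compl_singleton.inter isOpen_compl_singleton)
    filter_upwards [hmem] with t ht
    exact popov_zeta_eq ht.1 ht.2
  refine (htot.congr_of_eventuallyEq heq).congr_deriv ?_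
  field_simp
  ring

lemma popov_deriv_zeta_zero :
    deriv riemannZeta 0 = -((Real.log (2 * π) : ℂ)) / 2 := by
  set γ := Real.eulerMascheroniConstant with hγ
  set GG : ℂ → ℂ := fun s => 2 * (π : ℂ) ^ (-s / 2) * Complex.Gamma (s / 2 + 1) with hGG
  set NN : ℂ → ℂ := fun s => s * (completedRiemannZeta₀ s - 1 / (1 - s)) - 1 with hNN
  have hπ0 : (π : ℂ) ≠ 0 := ofReal_ne_zero.2 Real.pi_ne_zero
  have hGG0 : GG 0 = 2 := by
    simp [hGG, neg_zero, zero_div, cpow_zero, Complex.Gamma_one]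
  -- equality of ζ and NN/GG near 0
  have heq : riemannZeta =ᶠ[𝓝 0] fun s => NN s / GG s := by
    have hmem : Metric.ball (0 : ℂ) 1 ∈ 𝓝 (0 : ℂ) := Metric.ball_mem_nhds _ one_pos
    filter_upwards [hmem] with s hs
    rcases eq_or_ne s 0 with rfl | hs0
    · rw [riemannZeta_zero, hNN, hGG]
      simp [neg_zero, zero_div, cpow_zero, Complex.Gamma_one]
    · have hG_eq : GG s = s * Gammaℝ s := by
        show 2 * (π : ℂ) ^ (-s / 2) * Complex.Gamma (s / 2 + 1) = s * Gammaℝ s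
        rw [Gammaℝ_def, Complex.Gamma_add_one _ (div_ne_zero hs0 two_ne_zero)]
        ring
      have hN_eq : NN s = s * completedRiemannZeta s := by
        show s * (completedRiemannZeta₀ s - 1 / (1 - s)) - 1 = s * completedRiemannZeta s
        rw [completedRiemannZeta_eq]
        field_simp
        ring
      rw [riemannZeta_def_of_ne_zero hs0, hG_eq, hN_eq, mul_div_mul_left _ _ hs0]
  -- derivative of GG at 0
  have hg1 : HasDerivAt (fun s : ℂ => (π : ℂ) ^ (-s / 2))
      ((π : ℂ) ^ (-(0:ℂ) / 2) * Complex.log (π : ℂ) * (-1 / 2)) 0 := by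
    have hin : HasDerivAt (fun s : ℂ => -s / 2) (-1 / 2) 0 := by
      simpa using ((hasDerivAt_id (0 : ℂ)).neg.div_const 2)
    exact HasDerivAt.const_cpow hin (Or.inl hπ0)
  have hg2 : HasDerivAt (fun s : ℂ => Complex.Gamma (s / 2 + 1)) (-(γ : ℂ) * (1 / 2)) 0 := by
    have hin : HasDerivAt (fun s : ℂ => s / 2 + 1) (1 / 2) 0 := by
      simpa using ((hasDerivAt_id (0 : ℂ)).div_const 2).add_const 1
    have h1 : HasDerivAt Complex.Gamma (-(γ : ℂ)) ((0 : ℂ) / 2 + 1) := by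
      simpa using Complex.hasDerivAt_Gamma_one
    exact h1.comp 0 hin
  have hGGd : HasDerivAt GG
      (2 * ((π : ℂ) ^ (-(0:ℂ) / 2) * Complex.log (π : ℂ) * (-1 / 2)) * Complex.Gamma ((0:ℂ) / 2 + 1)
        + 2 * (π : ℂ) ^ (-(0:ℂ) / 2) * (-(γ : ℂ) * (1 / 2))) 0 := by
    exact (hg1.const_mul 2).mul hg2
  -- derivative of NN at 0
  have hP : HasDerivAt (fun s : ℂ => completedRiemannZeta₀ s - 1 / (1 - s))
      (deriv (fun s : ℂ => completedRiemannZeta₀ s - 1 / (1 - s)) 0) 0 := by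
    refine DifferentiableAt.hasDerivAt ?_
    refine (differentiable_completedZeta₀ 0).sub ?_
    refine DifferentiableAt.div (differentiableAt_const _) ?_ (by norm_num)
    exact (differentiable_const (1:ℂ)).differentiableAt.sub differentiableAt_id
  have hNNd : HasDerivAt NN
      (1 * (completedRiemannZeta₀ 0 - 1 / (1 - 0)) + 0 * deriv (fun s : ℂ => completedRiemannZeta₀ s - 1 / (1 - s)) 0) 0 := by
    exact ((hasDerivAt_id 0).mul hP).sub_const 1
  have hGGne : GG 0 ≠ 0 := by rw [hGG0]; norm_num
  have hdiv := hNNd.div hGGd hGGne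
  rw [heq.deriv_eq, show (fun s => NN s / GG s) = NN / GG from rfl, hdiv.deriv]
  -- numerics
  have hΛ0 : completedRiemannZeta₀ 0 = (γ - Complex.log (4 * (π:ℂ))) / 2 + 1 := by
    have := completedRiemannZeta₀_one_sub 1
    rw [sub_self] at this
    rw [this, completedRiemannZeta₀_one]
  have hNN0 : NN 0 = -1 := by simp [hNN]
  rw [hNN0, hGG0, hΛ0]
  simp only [neg_zero, zero_div, zero_add, cpow_zero, Complex.Gamma_one]
  have hlog4π : Complex.log (4 * (π:ℂ)) = (Real.log (4 * π) : ℂ) := by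
    rw [show (4 : ℂ) * (π:ℂ) = ((4 * π : ℝ) : ℂ) by push_cast; ring,
      Complex.ofReal_log (by positivity)]
  have hlogπ : Complex.log (π : ℂ) = (Real.log π : ℂ) := (Complex.ofReal_log Real.pi_pos.le).symm
  rw [hlog4π, hlogπ]
  have : Real.log (4 * π) + Real.log π = 2 * Real.log (2 * π) := by
    rw [show (4:ℝ) * π = (2*π)*2 by ring, Real.log_mul (by positivity) two_ne_zero,
      Real.log_mul two_ne_zero Real.pi_ne_zero]
    ring
  have h2 : (Real.log (4 * π) : ℂ) + (Real.log π : ℂ) = 2 * (Real.log (2 * π) : ℂ) := by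
    exact_mod_cast congrArg (fun r : ℝ => (r : ℂ)) this
  linear_combination (-1/4 : ℂ) * h2

noncomputable def popovA : ℂ → ℂ := fun s => (2 - s) / (2 * s) + riemannZeta (1 - s)
noncomputable def popovB : ℂ → ℂ :=
  fun s => (s - 1) ^ 2 * deriv popovQ s + (s - 1) * deriv popovR s - popovR s
noncomputable def popovE (x : ℝ) : ℂ → ℂ := fun s => Complex.exp (Complex.log (x : ℂ) * (s - 2))
noncomputable def popovH (x : ℝ) : ℂ → ℂ :=
  fun s => popovA s * popovE x s * popovB s / (popovZ s * (2 - s))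

lemma popovA_one : popovA 1 = 0 := by
  simp only [popovA, sub_self]
  norm_num [riemannZeta_zero]

lemma popovB_one : popovB 1 = -1 := by simp [popovB, popovR_one]

lemma popovE_one {x : ℝ} (hx0 : (x : ℂ) ≠ 0) : popovE x 1 = (x : ℂ)⁻¹ := by
  simp only [popovE]
  rw [show Complex.log (x:ℂ) * ((1:ℂ) - 2) = -Complex.log (x:ℂ) by ring, Complex.exp_neg,
    Complex.exp_log hx0]

lemma popovZ_diffOn : DifferentiableOn ℂ popovZ {s : ℂ | s ≠ 0} :=
  ((differentiableOn_id.sub (differentiableOn_const 1)).mul popovQ_diffOn).add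
    popovR_diff.differentiableOn

lemma popov_zeta_deriv_eq {s : ℂ} (hs0 : s ≠ 0) (hs1 : s ≠ 1) :
    deriv riemannZeta s = popovB s / (s - 1) ^ 2 := by
  rw [(popov_zeta_hasDeriv hs0 hs1).deriv, popovB]
  ring_nf

lemma popovQ_an1 : AnalyticAt ℂ popovQ 1 := popovQ_an 1 one_ne_zero
lemma popovR_an1 : AnalyticAt ℂ popovR 1 := popovR_an 1 trivial
lemma popovdQ_an1 : AnalyticAt ℂ (deriv popovQ) 1 := popovQ_an.deriv 1 one_ne_zero
lemma popovdR_an1 : AnalyticAt ℂ (deriv popovR) 1 := popovR_an.deriv 1 trivial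

lemma popovH_hasDeriv {x : ℝ} (hx : 1 < x) :
    HasDerivAt (popovH x) (((2 - Real.log (2 * π)) / (2 * x) : ℝ) : ℂ) 1 := by
  have hx0 : (x : ℂ) ≠ 0 := ofReal_ne_zero.2 (by linarith)
  have hsub1 : HasDerivAt (fun s : ℂ => s - 1) 1 1 := (hasDerivAt_id (1:ℂ)).sub_const 1
  have hApart1 : HasDerivAt (fun s : ℂ => (2 - s) / (2 * s)) (-1) 1 := by
    have h1 : HasDerivAt (fun s : ℂ => 2 - s) (-1) 1 := (hasDerivAt_id (1:ℂ)).const_sub 2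
    have h2 : HasDerivAt (fun s : ℂ => 2 * s) 2 1 := by
      simpa using (hasDerivAt_id (1:ℂ)).const_mul (2:ℂ)
    have h3 := h1.div h2 (by norm_num)
    refine h3.congr_deriv ?_
    norm_num
  have hApart2 : HasDerivAt (fun s : ℂ => riemannZeta (1 - s)) (deriv riemannZeta 0 * (-1)) 1 := by
    have hz : HasDerivAt riemannZeta (deriv riemannZeta 0) ((fun s : ℂ => 1 - s) 1) := by
      simpa using (differentiableAt_riemannZeta (show (0:ℂ) ≠ 1 by norm_num)).hasDerivAt
    exact hz.comp 1 ((hasDerivAt_id (1:ℂ)).const_sub 1)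
  have hAd : HasDerivAt popovA (-1 + deriv riemannZeta 0 * (-1)) 1 := hApart1.add hApart2
  have hEd : HasDerivAt (popovE x)
      (Complex.exp (Complex.log (x:ℂ) * ((1:ℂ) - 2)) * (Complex.log (x:ℂ) * 1)) 1 :=
    (((hasDerivAt_id (1:ℂ)).sub_const 2).const_mul (Complex.log (x:ℂ))).cexp
  have hQd : HasDerivAt popovQ (deriv popovQ 1) 1 := popovQ_an1.differentiableAt.hasDerivAt
  have hRd : HasDerivAt popovR (deriv popovR 1) 1 := (popovR_diff 1).hasDerivAt
  have hdQd : HasDerivAt (deriv popovQ) (deriv (deriv popovQ) 1) 1 :=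
    popovdQ_an1.differentiableAt.hasDerivAt
  have hdRd : HasDerivAt (deriv popovR) (deriv (deriv popovR) 1) 1 :=
    popovdR_an1.differentiableAt.hasDerivAt
  have hsq : HasDerivAt (fun s : ℂ => (s - 1) ^ 2) ((2:ℕ) * ((1:ℂ) - 1) ^ 1 * 1) 1 := hsub1.pow 2
  have hB1 := (hsq.mul hdQd).add (hsub1.mul hdRd)
  have hBd := hB1.sub hRd
  have hZd := (hsub1.mul hQd).add hRd
  have hNd := (hAd.mul hEd).mul hBd
  have hDd := hZd.mul ((hasDerivAt_id (1:ℂ)).const_sub 2)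
  have hne : popovZ 1 * (2 - 1) ≠ 0 := by rw [popovZ_one]; norm_num
  have hHd : HasDerivAt (popovH x) _ 1 := hNd.div hDd hne
  convert hHd using 1
  simp only [Pi.mul_apply, Pi.add_apply, Pi.sub_apply, id, popov_deriv_zeta_zero, popovE_one hx0, popovZ_one, popovR_one, popovA_one]
  push_cast
  field_simp
  ring

lemma popovA_an1 : AnalyticAt ℂ popovA 1 := by
  have h1 : AnalyticAt ℂ (fun s : ℂ => (2 - s) / (2 * s)) 1 := by
    exact (analyticAt_const.sub analyticAt_id).div (analyticAt_const.mul analyticAt_id)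
      (by norm_num)
  have hζ : AnalyticAt ℂ riemannZeta ((fun s : ℂ => 1 - s) 1) := by
    have : AnalyticAt ℂ riemannZeta 0 :=
      DifferentiableOn.analyticAt
        (fun s hs => (differentiableAt_riemannZeta hs).differentiableWithinAt)
        (isOpen_ne.mem_nhds (by norm_num : (0:ℂ) ≠ 1))
    simpa using this
  have h2 : AnalyticAt ℂ (fun s : ℂ => riemannZeta (1 - s)) 1 :=
    hζ.comp (analyticAt_const.sub analyticAt_id)
  exact h1.add h2

lemma popovE_an1 (x : ℝ) : AnalyticAt ℂ (popovE x) 1 :=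
  (analyticAt_const.mul (analyticAt_id.sub analyticAt_const)).cexp

lemma popovH_an1 (x : ℝ) : AnalyticAt ℂ (popovH x) 1 := by
  have hid : AnalyticAt ℂ (fun s : ℂ => s) 1 := analyticAt_id
  have hB : AnalyticAt ℂ popovB 1 :=
    ((((hid.sub analyticAt_const).pow 2).mul popovdQ_an1).add
      ((hid.sub analyticAt_const).mul popovdR_an1)).sub popovR_an1
  have hZ : AnalyticAt ℂ popovZ 1 := ((hid.sub analyticAt_const).mul popovQ_an1).add popovR_an1
  exact ((popovA_an1.mul (popovE_an1 x)).mul hB).div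
    (hZ.mul (analyticAt_const.sub hid)) (by rw [popovZ_one]; norm_num)

lemma popovH_deriv_contAt (x : ℝ) : ContinuousAt (deriv (popovH x)) 1 := by
  obtain ⟨U, hUsub, hUopen, hU1⟩ := mem_nhds_iff.1 (popovH_an1 x).eventually_analyticAt
  exact ((AnalyticOnNhd.deriv (fun s hs => hUsub hs)) 1 hU1).continuousAt

/-- For real `x > 1`, the function
`F(s) = ((2-s)/(2s(s-1)) - ζ(1-s)/(1-s)) x^{s-2} ζ'(s)/(ζ(s)(2-s))`
has a pole of order at most 2 at `s = 1` with residue `(2 - log(2π))/(2x)`: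
the derivative of `s ↦ (s-1)² F(s)` tends to `(2 - log(2π))/(2x)` as `s → 1`, `s ≠ 1`. -/
theorem popov_residue_at_one (x : ℝ) (hx : 1 < x) (F : ℂ → ℂ)
    (hF : ∀ s : ℂ, F s = ((2 - s) / (2 * s * (s - 1)) - riemannZeta (1 - s) / (1 - s)) *
        (x : ℂ) ^ (s - 2) * deriv riemannZeta s / (riemannZeta s * (2 - s))) :
    Tendsto (deriv fun s : ℂ => (s - 1) ^ 2 * F s) (nhdsWithin 1 {(1 : ℂ)}ᶜ)
      (nhds (((2 - Real.log (2 * π)) / (2 * x) : ℝ) : ℂ)) := by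
  have hx0 : (x : ℂ) ≠ 0 := ofReal_ne_zero.2 (by linarith)
  -- the open set on which the identifications hold
  have hU : IsOpen {s : ℂ | s ≠ 0 ∧ s ≠ 2} := by
    have : {s : ℂ | s ≠ 0 ∧ s ≠ 2} = {(0:ℂ)}ᶜ ∩ {(2:ℂ)}ᶜ := rfl
    rw [this]
    exact isOpen_compl_singleton.inter isOpen_compl_singleton
  have hZcont : ContinuousOn popovZ {s : ℂ | s ≠ 0 ∧ s ≠ 2} :=
    (popovZ_diffOn.continuousOn).mono fun s hs => hs.1
  set V : Set ℂ := {s : ℂ | s ≠ 0 ∧ s ≠ 2} ∩ popovZ ⁻¹' {(0:ℂ)}ᶜ with hV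
  have hVopen : IsOpen V := hZcont.isOpen_inter_preimage hU isOpen_compl_singleton
  have h1V : (1:ℂ) ∈ V := by
    refine ⟨⟨one_ne_zero, by norm_num⟩, ?_⟩
    simp [Set.mem_preimage, popovZ_one]
  -- pointwise identification away from 1
  have key : ∀ s ∈ V, s ≠ 1 → (s - 1) ^ 2 * F s = popovH x s := by
    intro s hs hs1
    have hs0 : s ≠ 0 := hs.1.1
    have hs2 : (2:ℂ) - s ≠ 0 := sub_ne_zero.2 fun h => hs.1.2 h.symm
    have hZs : popovZ s ≠ 0 := hs.2
    have hsub : s - 1 ≠ 0 := sub_ne_zero.2 hs1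
    have h1s : (1:ℂ) - s ≠ 0 := sub_ne_zero.2 fun h => hs1 h.symm
    have hzeta : riemannZeta s = popovZ s / (s - 1) := by
      rw [popov_zeta_eq hs0 hs1]
      show popovQ s + popovR s / (s - 1) = ((s - 1) * popovQ s + popovR s) / (s - 1)
      field_simp
    have hcpow : (x : ℂ) ^ (s - 2) = popovE x s := by
      rw [cpow_def_of_ne_zero hx0]; rfl
    have hC : (2 - s) / (2 * s * (s - 1)) - riemannZeta (1 - s) / (1 - s)
        = ((2 - s) / (2 * s) + riemannZeta (1 - s)) / (s - 1) := by
      field_simp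
      ring
    obtain ⟨a, ha⟩ : ∃ a, (2 - s) / (2 * s) + riemannZeta (1 - s) = a := ⟨_, rfl⟩
    rw [hF s, hzeta, popov_zeta_deriv_eq hs0 hs1, hcpow, hC]
    show _ = ((2 - s) / (2 * s) + riemannZeta (1 - s)) * popovE x s * popovB s /
      (popovZ s * (2 - s))
    rw [ha]
    field_simp
  -- eventual equality of derivatives
  have hev : (deriv fun s : ℂ => (s - 1) ^ 2 * F s) =ᶠ[nhdsWithin 1 {(1:ℂ)}ᶜ]
      deriv (popovH x) := by
    have hmem : V ∩ {(1:ℂ)}ᶜ ∈ nhdsWithin (1:ℂ) {(1:ℂ)}ᶜ :=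
      Filter.inter_mem (nhdsWithin_le_nhds (hVopen.mem_nhds h1V)) self_mem_nhdsWithin
    filter_upwards [hmem] with s hs
    apply Filter.EventuallyEq.deriv_eq
    have hopen : IsOpen (V ∩ {(1:ℂ)}ᶜ) := hVopen.inter isOpen_compl_singleton
    filter_upwards [hopen.mem_nhds hs] with t ht
    exact key t ht.1 ht.2
  -- conclude
  have htendsto : Tendsto (deriv (popovH x)) (nhdsWithin 1 {(1:ℂ)}ᶜ)
      (nhds (((2 - Real.log (2 * π)) / (2 * x) : ℝ) : ℂ)) := by
    have h1 := (popovH_deriv_contAt x).tendsto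
    rw [(popovH_hasDeriv hx).deriv] at h1
    exact h1.mono_left nhdsWithin_le_nhds
  exact htendsto.congr' hev.symm
end

section
/- Let x > 1 and r ≥ 1 be real numbers, let k ≥ 1 be an integer, and define F_r(s) = ((2−s)/(2s(s−1)) − ζ(1−s)/(1−s)) · x^{s−2} · ζ'(s+r−1)/(ζ(s+r−1)·(2−s)) for complex s. Then F_r has a simple pole at s = 1 − 2k − r (corresponding to the trivial zero −2k of ζ) with residue −((2(k+1)+r−1)/(2(1−2k−r)(2k+r)) + ζ(2k+r)/(2k+r)) · x^{−2k−r−1}/(2k+r+1); that is, (s − (1−2k−r))·F_r(s) tends to this value as s → 1 − 2k − r through values s ≠ 1 − 2k − r. -/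
open Complex Real Filter

-- Auxiliary: the derivative of zeta at a trivial zero -2k (k ≥ 1) is nonzero.
lemma zeta_deriv_trivial_zero_ne_zero (k : ℕ) (hk : 1 ≤ k) :
    deriv riemannZeta (-2 * (k : ℂ)) ≠ 0 := by
  have hπ : (π : ℝ) ≠ 0 := Real.pi_ne_zero
  set t : ℂ := 2 * (k : ℂ) + 1 with ht
  have hk1 : (1 : ℝ) ≤ (k : ℝ) := by exact_mod_cast hk
  have htr : t = ((2*(k:ℝ)+1 : ℝ) : ℂ) := by rw [ht]; push_cast; ring
  have htre : 1 < t.re := by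
    rw [htr, Complex.ofReal_re]; linarith
  have ht1 : (1 : ℂ) - t = -2 * (k : ℂ) := by rw [ht]; ring
  have htne1 : t ≠ 1 := by
    intro h; rw [h] at htre; norm_num at htre
  have htnen : ∀ n : ℕ, t ≠ -n := by
    intro n h
    have := congrArg Complex.re h
    simp only [neg_re, natCast_re] at this
    rw [this] at htre
    have : (0:ℝ) ≤ (n:ℝ) := Nat.cast_nonneg n
    linarith
  -- functional equation holds eventually near t
  have hev : (fun s => riemannZeta (1 - s)) =ᶠ[nhds t]
      (fun s => 2 * (2 * (π:ℂ)) ^ (-s) * Complex.Gamma s * Complex.cos ((π:ℂ) * s / 2) *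
        riemannZeta s) := by
    have hopen : IsOpen {s : ℂ | 1 < s.re} := isOpen_lt continuous_const Complex.continuous_re
    filter_upwards [hopen.mem_nhds htre] with s hs
    refine riemannZeta_one_sub (fun n h => ?_) (fun h => ?_)
    · have := congrArg Complex.re h
      simp only [neg_re, natCast_re] at this
      rw [this] at hs
      have : (0:ℝ) ≤ (n:ℝ) := Nat.cast_nonneg n
      linarith
    · rw [h] at hs; simp at hs
  -- LHS derivative
  have hζd : DifferentiableAt ℂ riemannZeta (-2 * (k : ℂ)) := by
    refine differentiableAt_riemannZeta ?_
    intro h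
    have := congrArg Complex.re h
    have h2 : (-2 * (k:ℂ)) = ((-2*(k:ℝ) : ℝ) : ℂ) := by push_cast; ring
    rw [h2, Complex.ofReal_re, Complex.one_re] at this
    linarith
  have hL : HasDerivAt (fun s => riemannZeta (1 - s)) (deriv riemannZeta (-2 * (k : ℂ)) * (-1)) t := by
    have hinner : HasDerivAt (fun s : ℂ => 1 - s) (-1) t := by
      simpa using (hasDerivAt_id t).const_sub 1
    have := (ht1 ▸ hζd).hasDerivAt.comp t hinner
    simpa [ht1, Function.comp_def] using this
  -- RHS derivative
  set P : ℂ → ℂ := fun s => 2 * (2 * (π:ℂ)) ^ (-s) * Complex.Gamma s with hP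
  set c : ℂ → ℂ := fun s => Complex.cos ((π:ℂ) * s / 2) with hc
  have h2π : (2 * (π:ℂ)) ≠ 0 := by
    simp [Complex.ofReal_ne_zero, hπ]
  have hPd : DifferentiableAt ℂ P t := by
    exact (((differentiableAt_id.neg).const_cpow (Or.inl h2π)).const_mul 2).mul
      (Complex.differentiableAt_Gamma t htnen)
  have hcd : HasDerivAt c (-Complex.sin ((π:ℂ) * t / 2) * ((π:ℂ) / 2)) t := by
    have hinner : HasDerivAt (fun s : ℂ => (π:ℂ) * s / 2) ((π:ℂ) / 2) t := by
      simpa using ((hasDerivAt_id t).const_mul (π:ℂ)).div_const 2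
    simpa [Function.comp_def] using (Complex.hasDerivAt_cos ((π:ℂ) * t / 2)).comp t hinner
  have hZd : DifferentiableAt ℂ riemannZeta t := differentiableAt_riemannZeta htne1
  -- value of cos at t is 0
  have harg : (π:ℂ) * t / 2 = ((π/2 + k * π : ℝ) : ℂ) := by
    rw [ht]; push_cast; ring
  have hct : c t = 0 := by
    rw [hc]
    simp only [harg, ← Complex.ofReal_cos]
    norm_cast
    simp [Real.cos_add, Real.sin_nat_mul_pi]
  have hst : Complex.sin ((π:ℂ) * t / 2) ≠ 0 := by
    rw [harg, ← Complex.ofReal_sin]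
    simp only [ne_eq, Complex.ofReal_eq_zero]
    rw [Real.sin_add_nat_mul_pi, Real.sin_pi_div_two]
    simp
  have hR : HasDerivAt (fun s => P s * c s * riemannZeta s)
      ((deriv P t * c t + P t * (-Complex.sin ((π:ℂ) * t / 2) * ((π:ℂ) / 2))) * riemannZeta t
        + P t * c t * deriv riemannZeta t) t :=
    (hPd.hasDerivAt.mul hcd).mul hZd.hasDerivAt
  have heq : deriv riemannZeta (-2 * (k : ℂ)) * (-1) =
      P t * (-Complex.sin ((π:ℂ) * t / 2) * ((π:ℂ) / 2)) * riemannZeta t := by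
    have e1 := hL.deriv
    have e2 := hR.deriv
    have e3 : deriv (fun s => riemannZeta (1 - s)) t
        = deriv (fun s => P s * c s * riemannZeta s) t := by
      refine Filter.EventuallyEq.deriv_eq ?_
      simpa [hP, hc, mul_assoc] using hev
    rw [e1, e2, hct] at e3
    rw [e3]; ring
  intro hzero
  rw [hzero, zero_mul] at heq
  have hPt : P t ≠ 0 := by
    refine mul_ne_zero (mul_ne_zero two_ne_zero ?_) (Complex.Gamma_ne_zero htnen)
    simp [Complex.cpow_eq_zero_iff, h2π]
  have hZt : riemannZeta t ≠ 0 := riemannZeta_ne_zero_of_one_lt_re htre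
  have hπc : ((π:ℂ) / 2) ≠ 0 := by
    simp [Complex.ofReal_ne_zero, hπ]
  exact (mul_ne_zero (mul_ne_zero hPt (mul_ne_zero (neg_ne_zero.mpr hst) hπc)) hZt) heq.symm

/-- For real `x > 1`, `r ≥ 1` and an integer `k ≥ 1`, the function
`F_r(s) = ((2-s)/(2s(s-1)) - ζ(1-s)/(1-s)) x^{s-2} ζ'(s+r-1)/(ζ(s+r-1)(2-s))`
has a simple pole at `s = 1 - 2k - r` (coming from the trivial zero `-2k` of `ζ`)
with residue `-((2(k+1)+r-1)/(2(1-2k-r)(2k+r)) + ζ(2k+r)/(2k+r)) x^{-2k-r-1}/(2k+r+1)`. -/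
theorem popov_residue_at_trivial_zero (x r : ℝ) (hx : 1 < x) (hr : 1 ≤ r)
    (k : ℕ) (hk : 1 ≤ k)
    (F : ℂ → ℂ)
    (hF : ∀ s : ℂ, F s =
      ((2 - s) / (2 * s * (s - 1)) - riemannZeta (1 - s) / (1 - s)) *
        (x : ℂ) ^ (s - 2) * deriv riemannZeta (s + r - 1) /
          (riemannZeta (s + r - 1) * (2 - s))) :
    Tendsto (fun s : ℂ => (s - (1 - 2 * (k : ℂ) - r)) * F s)
      (nhdsWithin (1 - 2 * (k : ℂ) - (r : ℂ)) {(1 - 2 * (k : ℂ) - (r : ℂ))}ᶜ)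
      (nhds (-((2 * ((k : ℂ) + 1) + r - 1) / (2 * (1 - 2 * k - r) * (2 * k + r)) +
          riemannZeta (2 * (k : ℂ) + r) / (2 * (k : ℂ) + r)) *
        (x : ℂ) ^ (-2 * (k : ℂ) - r - 1) / (2 * (k : ℂ) + r + 1))) := by
  have hk1 : (1:ℝ) ≤ (k:ℝ) := by exact_mod_cast hk
  set s₀ : ℂ := 1 - 2 * (k : ℂ) - (r : ℂ) with hs₀def
  have hs₀r : s₀ = ((1 - 2*(k:ℝ) - r : ℝ) : ℂ) := by rw [hs₀def]; push_cast; ring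
  have hxne : (x:ℂ) ≠ 0 := by
    simp only [ne_eq, Complex.ofReal_eq_zero]; linarith
  -- nonzero facts
  have hofR : ∀ y : ℝ, y ≠ 0 → ((y:ℝ):ℂ) ≠ 0 := fun y hy => by
    simpa [Complex.ofReal_eq_zero] using hy
  have hs₀ne0 : s₀ ≠ 0 := by
    rw [hs₀r]; exact hofR _ (by linarith)
  have hs₀ne1 : s₀ ≠ 1 := by
    rw [hs₀r]
    intro h
    have := congrArg Complex.re h
    rw [Complex.ofReal_re, Complex.one_re] at this
    linarith
  have h2s₀ : (2:ℂ) - s₀ ≠ 0 := by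
    rw [hs₀r]
    have : (2:ℂ) - ((1 - 2*(k:ℝ) - r : ℝ):ℂ) = ((1 + 2*(k:ℝ) + r : ℝ):ℂ) := by
      push_cast; ring
    rw [this]; exact hofR _ (by linarith)
  have hc0 : 2 * (k:ℂ) + r ≠ 0 := by
    have : 2 * (k:ℂ) + r = ((2*(k:ℝ) + r : ℝ):ℂ) := by push_cast; ring
    rw [this]; exact hofR _ (by linarith)
  have hc1 : 2 * (k:ℂ) + r + 1 ≠ 0 := by
    have : 2 * (k:ℂ) + r + 1 = ((2*(k:ℝ) + r + 1 : ℝ):ℂ) := by push_cast; ring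
    rw [this]; exact hofR _ (by linarith)
  have h1s₀ : (1:ℂ) - s₀ = 2 * (k:ℂ) + r := by rw [hs₀def]; ring
  have h1s₀ne1 : (1:ℂ) - s₀ ≠ 1 := by
    rw [h1s₀]
    intro h
    have : 2 * (k:ℂ) + r = ((2*(k:ℝ) + r : ℝ):ℂ) := by push_cast; ring
    rw [this] at h
    have := congrArg Complex.re h
    rw [Complex.ofReal_re, Complex.one_re] at this
    linarith
  have h1s₀ne0 : (1:ℂ) - s₀ ≠ 0 := by rw [h1s₀]; exact hc0
  -- the regular factor G
  set G : ℂ → ℂ := fun s =>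
    ((2 - s) / (2 * s * (s - 1)) - riemannZeta (1 - s) / (1 - s)) * (x : ℂ) ^ (s - 2) / (2 - s)
    with hGdef
  have hA : ContinuousAt (fun s : ℂ => (2 - s) / (2 * s * (s - 1))) s₀ := by
    apply ContinuousAt.div (by fun_prop) (by fun_prop)
    exact mul_ne_zero (mul_ne_zero two_ne_zero hs₀ne0) (sub_ne_zero.mpr hs₀ne1)
  have hB : ContinuousAt (fun s : ℂ => riemannZeta (1 - s) / (1 - s)) s₀ := by
    apply ContinuousAt.div ?_ (by fun_prop) h1s₀ne0
    exact ((differentiableAt_riemannZeta h1s₀ne1).continuousAt).comp (by fun_prop)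
  have hX : ContinuousAt (fun s : ℂ => (x:ℂ) ^ (s - 2)) s₀ :=
    (continuousAt_const_cpow hxne).comp (by fun_prop)
  have hGc : ContinuousAt G s₀ := ((hA.sub hB).mul hX).div (by fun_prop) h2s₀
  have hg₁ : Tendsto G (nhdsWithin s₀ {s₀}ᶜ) (nhds (G s₀)) :=
    hGc.tendsto.mono_left nhdsWithin_le_nhds
  -- the zeta-quotient factor
  set u₀ : ℂ := -2 * (k:ℂ) with hu₀def
  have hu₀ne1 : u₀ ≠ 1 := by
    rw [hu₀def]
    intro h
    have : -2 * (k:ℂ) = ((-2*(k:ℝ) : ℝ):ℂ) := by push_cast; ring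
    rw [this] at h
    have := congrArg Complex.re h
    rw [Complex.ofReal_re, Complex.one_re] at this
    linarith
  have hζu₀ : riemannZeta u₀ = 0 := by
    have h1 : u₀ = -2 * (((k - 1 : ℕ) : ℂ) + 1) := by
      rw [hu₀def]
      have : ((k - 1 : ℕ) : ℂ) = (k : ℂ) - 1 := by
        push_cast [Nat.cast_sub hk]; ring
      rw [this]; ring
    rw [h1]
    exact riemannZeta_neg_two_mul_nat_add_one (k - 1)
  have hζ'ne : deriv riemannZeta u₀ ≠ 0 := zeta_deriv_trivial_zero_ne_zero k hk
  have hd : DifferentiableAt ℂ riemannZeta u₀ := differentiableAt_riemannZeta hu₀ne1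
  have hslope : Tendsto (slope riemannZeta u₀) (nhdsWithin u₀ {u₀}ᶜ)
      (nhds (deriv riemannZeta u₀)) :=
    hasDerivAt_iff_tendsto_slope.mp hd.hasDerivAt
  have hφs₀ : s₀ + (r:ℂ) - 1 = u₀ := by rw [hs₀def, hu₀def]; ring
  have hφ : Tendsto (fun s : ℂ => s + (r:ℂ) - 1) (nhdsWithin s₀ {s₀}ᶜ)
      (nhdsWithin u₀ {u₀}ᶜ) := by
    have hcont : ContinuousAt (fun s : ℂ => s + (r:ℂ) - 1) s₀ :=
      (continuousAt_id.add continuousAt_const).sub continuousAt_const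
    have hmaps : Set.MapsTo (fun s : ℂ => s + (r:ℂ) - 1) {s₀}ᶜ {u₀}ᶜ := by
      intro s hs
      simp only [Set.mem_compl_iff, Set.mem_singleton_iff] at hs ⊢
      intro h
      apply hs
      simp only [hs₀def, hu₀def] at h ⊢
      linear_combination h
    have := (hcont.continuousWithinAt (s := {s₀}ᶜ)).tendsto_nhdsWithin hmaps
    rwa [hφs₀] at this
  have hζ'cont : ContinuousAt (deriv riemannZeta) u₀ := by
    have hopen : IsOpen {s : ℂ | s ≠ 1} := isOpen_ne
    have han : AnalyticOnNhd ℂ riemannZeta {s : ℂ | s ≠ 1} :=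
      (analyticOnNhd_iff_differentiableOn hopen).mpr
        (fun s hs => (differentiableAt_riemannZeta hs).differentiableWithinAt)
    exact ((han.deriv) u₀ hu₀ne1).continuousAt
  have hnum : Tendsto (fun s : ℂ => deriv riemannZeta (s + (r:ℂ) - 1))
      (nhdsWithin s₀ {s₀}ᶜ) (nhds (deriv riemannZeta u₀)) :=
    hζ'cont.tendsto.comp (hφ.mono_right nhdsWithin_le_nhds)
  have hden : Tendsto (fun s : ℂ => slope riemannZeta u₀ (s + (r:ℂ) - 1))
      (nhdsWithin s₀ {s₀}ᶜ) (nhds (deriv riemannZeta u₀)) :=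
    hslope.comp hφ
  have hg₂ : Tendsto (fun s : ℂ => (s - s₀) * deriv riemannZeta (s + (r:ℂ) - 1) /
      riemannZeta (s + (r:ℂ) - 1)) (nhdsWithin s₀ {s₀}ᶜ) (nhds 1) := by
    have h := hnum.div hden hζ'ne
    rw [div_self hζ'ne] at h
    refine h.congr' ?_
    filter_upwards [self_mem_nhdsWithin] with s hs
    have hss : s - s₀ ≠ 0 := sub_ne_zero.mpr hs
    have harg : s + (r:ℂ) - 1 - u₀ = s - s₀ := by rw [hu₀def, hs₀def]; ring
    simp only [Pi.div_apply]
    rw [slope_def_field, hζu₀, sub_zero, harg, div_div_eq_mul_div]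
    ring
  have hprod := hg₁.mul hg₂
  rw [mul_one] at hprod
  -- identify the function
  have hfun : ∀ s : ℂ, (s - s₀) * F s = G s * ((s - s₀) * deriv riemannZeta (s + (r:ℂ) - 1) /
      riemannZeta (s + (r:ℂ) - 1)) := by
    intro s
    rw [hF s, hGdef,
      show riemannZeta (s + (r:ℂ) - 1) * (2 - s) = (2 - s) * riemannZeta (s + (r:ℂ) - 1)
        from mul_comm _ _, ← div_div]
    ring
  -- identify the value
  have hval : G s₀ =
      -((2 * ((k : ℂ) + 1) + r - 1) / (2 * (1 - 2 * k - r) * (2 * k + r)) +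
          riemannZeta (2 * (k : ℂ) + r) / (2 * (k : ℂ) + r)) *
        (x : ℂ) ^ (-2 * (k : ℂ) - r - 1) / (2 * (k : ℂ) + r + 1) := by
    rw [hGdef]
    simp only []
    rw [h1s₀]
    have he : s₀ - 2 = -2 * (k:ℂ) - r - 1 := by rw [hs₀def]; ring
    rw [he]
    rw [hs₀def]
    have e2 : 2*(1 - 2*(k:ℂ) - r)*((1 - 2*(k:ℂ) - r) - 1)
        = -(2*(1 - 2*(k:ℂ) - r)*(2*(k:ℂ)+r)) := by ring
    rw [e2, div_neg]
    ring
  rw [← hval]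
  exact hprod.congr (fun s => (hfun s).symm)
end
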